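/- (Theorem 3.3, upper bound) Let σ > 0 and δ > 0, set r = δ/σ, and let p_z be the standardized two-component Gaussian mixture density p_z(v) = (N(v;−δ̂,σ̂) + N(v;δ̂,σ̂))/2 with δ̂ = δ/√(σ²+δ²), σ̂ = σ/√(σ²+δ²). Then the Kullback–Leibler divergence from the standard normal density satisfies KL(p_z ‖ N(·;0,1)) ≤ (1/2) ln(1 + r²). -/

import Mathlib

open Real MeasureTheory
open Filter

/-- The univariate Gaussian density `N(v; μ, σ) = (1/(σ√(2π))) exp(−(v−μ)²/(2σ²))`. -/
noncomputable def gauss (μ σ : ℝ) (v : ℝ) : ℝ :=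
  (1 / (σ * Real.sqrt (2 * π))) * Real.exp (-((v - μ) ^ 2) / (2 * σ ^ 2))

/-- The KL divergence `KL(p‖q) = ∫ p(v) ln(p(v)/q(v)) dv` of densities on ℝ. -/
noncomputable def klDiv (p q : ℝ → ℝ) : ℝ :=
  ∫ v : ℝ, p v * Real.log (p v / q v)

lemma sqrt_two_pi_pos : 0 < Real.sqrt (2 * π) := Real.sqrt_pos.2 (by positivity)

lemma gauss_pos (μ s v : ℝ) (hs : 0 < s) : 0 < gauss μ s v := by
  unfold gauss
  have h := sqrt_two_pi_pos
  positivity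

lemma gauss01_eq (v : ℝ) :
    gauss 0 1 v = (Real.sqrt (2 * π))⁻¹ * Real.exp (-(1/2) * v ^ 2) := by
  unfold gauss
  rw [show -((v - 0) ^ 2) / (2 * 1 ^ 2) = -(1/2) * v ^ 2 by ring, one_mul, one_div]

lemma int_e : Integrable (fun x : ℝ => Real.exp (-(1/2) * x ^ 2)) :=
  integrable_exp_neg_mul_sq (by norm_num)

lemma int_xe : Integrable (fun x : ℝ => x * Real.exp (-(1/2) * x ^ 2)) :=
  integrable_mul_exp_neg_mul_sq (by norm_num)

lemma int_x2e : Integrable (fun x : ℝ => x ^ 2 * Real.exp (-(1/2) * x ^ 2)) := by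
  have hg : Integrable (fun x : ℝ => 4 * Real.exp (-(1/4) * x ^ 2)) :=
    (integrable_exp_neg_mul_sq (by norm_num)).const_mul 4
  refine hg.mono' ((by fun_prop : Continuous fun x : ℝ => x ^ 2 * Real.exp (-(1/2) * x ^ 2)).aestronglyMeasurable)
    (Eventually.of_forall fun x => ?_)
  have h1 : (1/4) * x ^ 2 ≤ Real.exp ((1/4) * x ^ 2) := by
    have := Real.add_one_le_exp ((1/4) * x ^ 2); linarith
  have h2 : x ^ 2 ≤ 4 * Real.exp ((1/4) * x ^ 2) := by linarith
  have h3 : (0:ℝ) < Real.exp (-(1/2) * x ^ 2) := Real.exp_pos _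
  have hb : x ^ 2 * Real.exp (-(1/2) * x ^ 2) ≤ 4 * Real.exp (-(1/4) * x ^ 2) := by
    have := mul_le_mul_of_nonneg_right h2 h3.le
    calc x ^ 2 * Real.exp (-(1/2) * x ^ 2)
        ≤ 4 * Real.exp ((1/4) * x ^ 2) * Real.exp (-(1/2) * x ^ 2) := this
      _ = 4 * Real.exp (-(1/4) * x ^ 2) := by rw [mul_assoc, ← Real.exp_add]; ring_nf
  rwa [Real.norm_eq_abs, abs_of_nonneg (by positivity)]

lemma ie_val : ∫ x : ℝ, Real.exp (-(1/2) * x ^ 2) = Real.sqrt (2 * π) := by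
  rw [integral_gaussian, show π / (1/2 : ℝ) = 2 * π by ring]

lemma ixe_val : ∫ x : ℝ, x * Real.exp (-(1/2) * x ^ 2) = 0 := by
  have h := MeasureTheory.integral_neg_eq_self (fun x : ℝ => x * Real.exp (-(1/2) * x ^ 2)) volume
  have heq : (fun x : ℝ => (-x) * Real.exp (-(1/2) * (-x) ^ 2))
      = fun x : ℝ => -(x * Real.exp (-(1/2) * x ^ 2)) := by
    funext x; rw [neg_sq]; ring
  rw [heq, integral_neg] at h
  linarith

lemma ix2e_val : ∫ x : ℝ, x ^ 2 * Real.exp (-(1/2) * x ^ 2) = Real.sqrt (2 * π) := by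
  have hderiv : ∀ x : ℝ, HasDerivAt (fun x : ℝ => x * Real.exp (-(1/2) * x ^ 2))
      (Real.exp (-(1/2) * x ^ 2) - x ^ 2 * Real.exp (-(1/2) * x ^ 2)) x := by
    intro x
    have h1 : HasDerivAt (fun x : ℝ => -(1/2) * x ^ 2) (-(1/2) * (2 * x)) x := by
      simpa using (hasDerivAt_pow 2 x).const_mul (-(1/2) : ℝ)
    have h3 : HasDerivAt (fun y : ℝ => y * Real.exp (-(1/2) * y ^ 2))
        (1 * Real.exp (-(1/2) * x ^ 2) + id x * (Real.exp (-(1/2) * x ^ 2) * (-(1/2) * (2 * x)))) x :=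
      (hasDerivAt_id x).mul h1.exp
    convert h3 using 1
    show _ = 1 * _ + x * _; ring
  have h0 := integral_eq_zero_of_hasDerivAt_of_integrable hderiv (int_e.sub int_x2e) int_xe
  rw [integral_sub int_e int_x2e, ie_val] at h0
  linarith

lemma int_gpoly (a b c : ℝ) :
    Integrable (fun x : ℝ => gauss 0 1 x * (a + b * x + c * x ^ 2)) := by
  have heq : (fun x : ℝ => gauss 0 1 x * (a + b * x + c * x ^ 2))
      = fun x : ℝ => (a * (Real.sqrt (2 * π))⁻¹) * Real.exp (-(1/2) * x ^ 2)
        + (b * (Real.sqrt (2 * π))⁻¹) * (x * Real.exp (-(1/2) * x ^ 2))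
        + (c * (Real.sqrt (2 * π))⁻¹) * (x ^ 2 * Real.exp (-(1/2) * x ^ 2)) := by
    funext x; rw [gauss01_eq]; ring
  rw [heq]
  exact ((int_e.const_mul _).add (int_xe.const_mul _)).add (int_x2e.const_mul _)

lemma igpoly_val (a b c : ℝ) :
    ∫ x : ℝ, gauss 0 1 x * (a + b * x + c * x ^ 2) = a + c := by
  have heq : (fun x : ℝ => gauss 0 1 x * (a + b * x + c * x ^ 2))
      = fun x : ℝ => (a * (Real.sqrt (2 * π))⁻¹) * Real.exp (-(1/2) * x ^ 2)
        + (b * (Real.sqrt (2 * π))⁻¹) * (x * Real.exp (-(1/2) * x ^ 2))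
        + (c * (Real.sqrt (2 * π))⁻¹) * (x ^ 2 * Real.exp (-(1/2) * x ^ 2)) := by
    funext x; rw [gauss01_eq]; ring
  rw [heq]
  rw [integral_add
      (f := fun x : ℝ => (a * (Real.sqrt (2 * π))⁻¹) * Real.exp (-(1/2) * x ^ 2)
        + (b * (Real.sqrt (2 * π))⁻¹) * (x * Real.exp (-(1/2) * x ^ 2)))
      (g := fun x : ℝ => (c * (Real.sqrt (2 * π))⁻¹) * (x ^ 2 * Real.exp (-(1/2) * x ^ 2)))
      ((int_e.const_mul _).add (int_xe.const_mul _)) (int_x2e.const_mul _)]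
  rw [integral_add
      (f := fun x : ℝ => (a * (Real.sqrt (2 * π))⁻¹) * Real.exp (-(1/2) * x ^ 2))
      (g := fun x : ℝ => (b * (Real.sqrt (2 * π))⁻¹) * (x * Real.exp (-(1/2) * x ^ 2)))
      (int_e.const_mul _) (int_xe.const_mul _)]
  rw [integral_const_mul, integral_const_mul, integral_const_mul, ie_val, ixe_val, ix2e_val]
  have h := sqrt_two_pi_pos.ne'
  field_simp
  ring

lemma log_gauss_ratio (μ s : ℝ) (hs : 0 < s) (v : ℝ) :
    Real.log (gauss μ s v / gauss 0 1 v)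
      = -Real.log s - (v - μ) ^ 2 / (2 * s ^ 2) + v ^ 2 / 2 := by
  have h2π := sqrt_two_pi_pos.ne'
  have hratio : gauss μ s v / gauss 0 1 v
      = s⁻¹ * Real.exp (-((v - μ) ^ 2) / (2 * s ^ 2) + v ^ 2 / 2) := by
    unfold gauss
    rw [mul_div_mul_comm, ← Real.exp_sub]
    congr 1
    · field_simp
    · ring
  rw [hratio, Real.log_mul (inv_ne_zero hs.ne') (Real.exp_ne_zero _), Real.log_inv,
    Real.log_exp]
  ring

lemma relent (μ s : ℝ) (hs : 0 < s) :
    Integrable (fun v : ℝ => gauss μ s v * Real.log (gauss μ s v / gauss 0 1 v)) ∧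
    ∫ v : ℝ, gauss μ s v * Real.log (gauss μ s v / gauss 0 1 v)
      = -Real.log s + μ ^ 2 / 2 + (s ^ 2 - 1) / 2 := by
  set F : ℝ → ℝ := fun v => gauss μ s v * (-Real.log s - (v - μ) ^ 2 / (2 * s ^ 2) + v ^ 2 / 2)
    with hF
  have hFeq : (fun v : ℝ => gauss μ s v * Real.log (gauss μ s v / gauss 0 1 v)) = F := by
    funext v; rw [log_gauss_ratio μ s hs v]
  set P : ℝ → ℝ := fun x => gauss 0 1 x
      * ((-Real.log s + μ ^ 2 / 2) + (s * μ) * x + ((s ^ 2 - 1) / 2) * x ^ 2) with hP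
  have hg : ∀ x : ℝ, gauss μ s (s * x + μ) = s⁻¹ * gauss 0 1 x := by
    intro x
    unfold gauss
    rw [show -((s * x + μ - μ) ^ 2) / (2 * s ^ 2) = -((x - 0) ^ 2) / (2 * 1 ^ 2) by
      field_simp; ring]
    rw [show (1 : ℝ) / (s * Real.sqrt (2 * π)) = s⁻¹ * (1 / (1 * Real.sqrt (2 * π))) by
      field_simp]
    ring
  have hcomp : (fun x : ℝ => F (s * x + μ)) = fun x => s⁻¹ * P x := by
    funext x
    have hx : F (s * x + μ) = gauss μ s (s * x + μ)
        * (-Real.log s - (s * x + μ - μ) ^ 2 / (2 * s ^ 2) + (s * x + μ) ^ 2 / 2) := rfl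
    rw [hx, hg x, hP]
    have : -Real.log s - (s * x + μ - μ) ^ 2 / (2 * s ^ 2) + (s * x + μ) ^ 2 / 2
        = (-Real.log s + μ ^ 2 / 2) + (s * μ) * x + ((s ^ 2 - 1) / 2) * x ^ 2 := by
      field_simp; ring
    rw [this]; ring
  have hPint : Integrable P := int_gpoly _ _ _
  have hQint : Integrable (fun x : ℝ => F (s * x + μ)) := by
    rw [hcomp]; exact hPint.const_mul _
  have hFint : Integrable F := by
    have h1 : Integrable (fun v : ℝ => F (s * (s⁻¹ * v) + μ)) :=
      hQint.comp_mul_left' (inv_ne_zero hs.ne')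
    have h2 : Integrable (fun v : ℝ => F (s * (s⁻¹ * (v + -μ)) + μ)) := h1.comp_add_right (-μ)
    have : (fun v : ℝ => F (s * (s⁻¹ * (v + -μ)) + μ)) = F := by
      funext v; congr 1; field_simp; ring
    rwa [this] at h2
  constructor
  · rwa [hFeq]
  rw [hFeq]
  have hPval : ∫ x : ℝ, P x = (-Real.log s + μ ^ 2 / 2) + (s ^ 2 - 1) / 2 := igpoly_val _ _ _
  have step1 : ∫ v : ℝ, F v = ∫ v : ℝ, F (v + μ) :=
    (MeasureTheory.integral_add_right_eq_self F μ).symm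
  have step2 : (fun v : ℝ => F (v + μ)) = fun v : ℝ => (fun x => F (s * x + μ)) (s⁻¹ * v) := by
    funext v; simp only []; congr 1; field_simp
  have step3 : ∫ v : ℝ, (fun x => F (s * x + μ)) (s⁻¹ * v)
      = |(s⁻¹)⁻¹| • ∫ x : ℝ, F (s * x + μ) :=
    MeasureTheory.Measure.integral_comp_mul_left (fun x => F (s * x + μ)) s⁻¹
  rw [step1, step2, step3, hcomp, integral_const_mul, inv_inv, abs_of_pos hs, hPval,
    smul_eq_mul]
  field_simp

lemma logsum (a b c : ℝ) (ha : 0 < a) (hb : 0 < b) (hc : 0 < c) :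
    (a + b) / 2 * Real.log ((a + b) / 2 / c)
      ≤ (a * Real.log (a / c) + b * Real.log (b / c)) / 2 := by
  have hm : 0 < (a + b) / 2 := by positivity
  have key : ∀ x : ℝ, 0 < x →
      x - (a + b) / 2 ≤ x * (Real.log x - Real.log ((a + b) / 2)) := by
    intro x hx
    have h := Real.log_le_sub_one_of_pos (show 0 < (a + b) / 2 / x by positivity)
    rw [Real.log_div hm.ne' hx.ne'] at h
    have h2 := mul_le_mul_of_nonneg_left h hx.le
    have h3 : x * ((a + b) / 2 / x) = (a + b) / 2 := by field_simp
    nlinarith [h2, h3]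
  have h1 := key a ha
  have h2 := key b hb
  rw [Real.log_div hm.ne' hc.ne', Real.log_div ha.ne' hc.ne', Real.log_div hb.ne' hc.ne']
  nlinarith [h1, h2]

/-- Theorem 3.3, upper bound: for the standardized two-component Gaussian
mixture `p_z(v) = (N(v;−δ̂,σ̂) + N(v;δ̂,σ̂))/2` with `r = δ/σ`,
`KL(p_z ‖ N(·;0,1)) ≤ (1/2) ln(1 + r²)`. -/
theorem klDiv_standardized_mixture_upper (σ δ : ℝ) (hσ : 0 < σ) (hδ : 0 < δ)
    (r δhat σhat : ℝ) (hr : r = δ / σ)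
    (hδhat : δhat = δ / Real.sqrt (σ ^ 2 + δ ^ 2))
    (hσhat : σhat = σ / Real.sqrt (σ ^ 2 + δ ^ 2)) :
    klDiv (fun v => (gauss (-δhat) σhat v + gauss δhat σhat v) / 2) (gauss 0 1) ≤
      (1 / 2) * Real.log (1 + r ^ 2) := by
  have hsum : (0:ℝ) < σ ^ 2 + δ ^ 2 := by positivity
  have hsqrt : 0 < Real.sqrt (σ ^ 2 + δ ^ 2) := Real.sqrt_pos.2 hsum
  have hs : 0 < σhat := by rw [hσhat]; positivity
  have hsq : σhat ^ 2 + δhat ^ 2 = 1 := by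
    rw [hσhat, hδhat, div_pow, div_pow, Real.sq_sqrt hsum.le]
    field_simp
  have hT : -Real.log σhat = 1 / 2 * Real.log (1 + r ^ 2) := by
    have h1 : (1 : ℝ) + r ^ 2 = (σ ^ 2 + δ ^ 2) / σ ^ 2 := by
      rw [hr, div_pow]; field_simp
    rw [hσhat, Real.log_div hσ.ne' hsqrt.ne', h1,
      Real.log_div hsum.ne' (by positivity), Real.log_sqrt hsum.le,
      Real.log_pow]
    push_cast
    ring
  have hTnn : 0 ≤ 1 / 2 * Real.log (1 + r ^ 2) := by
    have : (1:ℝ) ≤ 1 + r ^ 2 := by nlinarith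
    have := Real.log_nonneg this
    linarith
  have H1 := relent (-δhat) σhat hs
  have H2 := relent δhat σhat hs
  set F1 : ℝ → ℝ := fun v => gauss (-δhat) σhat v * Real.log (gauss (-δhat) σhat v / gauss 0 1 v)
  set F2 : ℝ → ℝ := fun v => gauss δhat σhat v * Real.log (gauss δhat σhat v / gauss 0 1 v)
  set f : ℝ → ℝ := fun v => (gauss (-δhat) σhat v + gauss δhat σhat v) / 2
    * Real.log ((gauss (-δhat) σhat v + gauss δhat σhat v) / 2 / gauss 0 1 v) with hf
  have hg_int : Integrable (fun v => (F1 v + F2 v) / 2) := (H1.1.add H2.1).div_const 2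
  have hg_val : ∫ v : ℝ, (F1 v + F2 v) / 2 = 1 / 2 * Real.log (1 + r ^ 2) := by
    rw [integral_div, integral_add H1.1 H2.1, H1.2, H2.2, ← hT]
    nlinarith [hsq]
  have h_pt : ∀ v : ℝ, f v ≤ (F1 v + F2 v) / 2 := fun v =>
    logsum _ _ _ (gauss_pos _ _ v hs) (gauss_pos _ _ v hs) (gauss_pos _ _ v one_pos)
  have hkl : klDiv (fun v => (gauss (-δhat) σhat v + gauss δhat σhat v) / 2) (gauss 0 1)
      = ∫ v : ℝ, f v := rfl
  rw [hkl]
  by_cases hfi : Integrable f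
  · calc ∫ v : ℝ, f v ≤ ∫ v : ℝ, (F1 v + F2 v) / 2 :=
        integral_mono hfi hg_int h_pt
      _ = 1 / 2 * Real.log (1 + r ^ 2) := hg_val
  · rw [integral_undef hfi]
    exact hTnn
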